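/- Let d ≥ 1, let G ∈ M_d(ℂ) be a Hermitian unitary matrix, let O ∈ M_d(ℂ) be Hermitian with O·G = −G·O, and let ρ ∈ M_d(ℂ) be a density matrix. With W(θ) = exp(−iθG), one has (1/(2π)) ∫₀^{2π} (Tr[O·W(θ)·ρ·W(θ)†])² dθ = (1/2)·(Tr[Oρ])² + (1/2)·(Tr[iOGρ])², and in particular this expectation is at least (1/2)·(Tr[Oρ])². -/

import Mathlib

open Matrix MeasureTheory
open scoped ComplexOrder

noncomputable section

/-- The rotation `W(θ) = exp(−iθG)` generated by a matrix `G`. -/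
def Wrot {d : ℕ} (G : Matrix (Fin d) (Fin d) ℂ) (θ : ℝ) : Matrix (Fin d) (Fin d) ℂ :=
  NormedSpace.exp ((-(Complex.I * (θ : ℂ))) • G)

/-- The commuting part `O₁ = (O + G·O·G)/2` of `O` with respect to `G`. -/
def Opart1 {d : ℕ} (G O : Matrix (Fin d) (Fin d) ℂ) : Matrix (Fin d) (Fin d) ℂ :=
  (2⁻¹ : ℂ) • (O + G * O * G)

/-- The anticommuting part `O₂ = (O − G·O·G)/2` of `O` with respect to `G`. -/
def Opart2 {d : ℕ} (G O : Matrix (Fin d) (Fin d) ℂ) : Matrix (Fin d) (Fin d) ℂ :=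
  (2⁻¹ : ℂ) • (O - G * O * G)

/-- Closed form for `Wrot` when `G` squares to the identity. -/
theorem Wrot_eq {d : ℕ} (G : Matrix (Fin d) (Fin d) ℂ) (hGunit : G * G = 1) (θ : ℝ) :
    Wrot G θ = (Real.cos θ : ℂ) • (1 : Matrix (Fin d) (Fin d) ℂ)
      + (-(Complex.I * (Real.sin θ : ℂ))) • G := by
  rw [Wrot, NormedSpace.exp_eq_tsum (𝕂 := ℂ)]
  refine HasSum.tsum_eq ?_
  have hG2 : ∀ k : ℕ, G ^ (2 * k) = 1 := by
    intro k
    rw [pow_mul, sq, hGunit, one_pow]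
  have hw : ∀ k : ℕ, (-(Complex.I * (θ:ℂ))) ^ (2 * k) = (-1 : ℂ) ^ k * (θ:ℂ) ^ (2 * k) := by
    intro k
    have h2 : (-(Complex.I * (θ:ℂ))) ^ 2 = (-1) * (θ:ℂ) ^ 2 := by
      rw [neg_pow]
      simp [mul_pow, Complex.I_sq]
    rw [pow_mul, h2, mul_pow, ← pow_mul]
  refine HasSum.even_add_odd ?_ ?_
  · have hc : HasSum (fun n : ℕ => (-1:ℂ) ^ n * (θ:ℂ) ^ (2 * n) / ((2 * n).factorial : ℂ))
        ((Real.cos θ : ℂ)) := by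
      rw [Complex.ofReal_cos]
      exact Complex.hasSum_cos θ
    convert hc.smul_const (1 : Matrix (Fin d) (Fin d) ℂ) using 2 with k
    · rfl
    rw [smul_pow, hG2, smul_smul]
    congr 1
    rw [hw, div_eq_mul_inv]
    ring
  · have hs : HasSum (fun n : ℕ =>
        (-Complex.I) * ((-1:ℂ) ^ n * (θ:ℂ) ^ (2 * n + 1) / (((2 * n + 1).factorial : ℂ))))
        ((-(Complex.I * (Real.sin θ : ℂ)))) := by
      have := (Complex.hasSum_sin (θ:ℂ)).mul_left (-Complex.I)
      rw [Complex.ofReal_sin]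
      convert this using 1
      · rfl
      ring
    convert hs.smul_const G using 2 with k
    · rfl
    rw [smul_pow, pow_succ G (2 * k), hG2, one_mul, smul_smul]
    congr 1
    rw [pow_succ, hw, pow_succ, div_eq_mul_inv]
    ring

/-- Trace formula for the rotated expectation. -/
theorem trace_Wrot {d : ℕ} (G O ρ : Matrix (Fin d) (Fin d) ℂ)
    (hGherm : G.IsHermitian) (hGunit : G * G = 1)
    (hanti : O * G = -(G * O)) (θ : ℝ) :
    (O * (Wrot G θ * ρ * (Wrot G θ)ᴴ)).trace
      = ((Real.cos θ : ℂ)^2 - (Real.sin θ : ℂ)^2) * (O * ρ).trace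
        - 2 * Complex.I * (Real.sin θ : ℂ) * (Real.cos θ : ℂ) * ((O * G) * ρ).trace := by
  have hW : ∀ θ : ℝ, Wrot G θ = (Real.cos θ : ℂ) • (1 : Matrix (Fin d) (Fin d) ℂ)
      + (-(Complex.I * (Real.sin θ : ℂ))) • G := Wrot_eq G hGunit
  have hWH : (Wrot G θ)ᴴ = (Real.cos θ : ℂ) • (1 : Matrix (Fin d) (Fin d) ℂ)
      + (Complex.I * (Real.sin θ : ℂ)) • G := by
    rw [hW]
    simp only [conjTranspose_add, conjTranspose_smul, conjTranspose_one, hGherm.eq, star_neg,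
      star_mul', Complex.star_def, Complex.conj_I, Complex.conj_ofReal]
    module
  have hGO : G * O = -(O * G) := by rw [hanti, neg_neg]
  have h1 : (O * (ρ * G)).trace = -((O * G * ρ)).trace := by
    calc (O * (ρ * G)).trace = ((O * ρ) * G).trace := by rw [mul_assoc]
    _ = (G * (O * ρ)).trace := trace_mul_comm _ _
    _ = ((G * O) * ρ).trace := by rw [mul_assoc]
    _ = -((O * G * ρ)).trace := by rw [hGO]; simp
  have h2 : (O * (G * ρ)).trace = (O * G * ρ).trace := by rw [mul_assoc]
  have h3 : (O * (G * ρ * G)).trace = -(O * ρ).trace := by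
    calc (O * (G * ρ * G)).trace = ((O * G * ρ) * G).trace := by simp only [← mul_assoc]
    _ = (G * (O * G * ρ)).trace := trace_mul_comm _ _
    _ = ((G * O) * (G * ρ)).trace := by rw [mul_assoc, mul_assoc]
    _ = (-(O * (G * G) * ρ)).trace := by rw [hGO]; simp [mul_assoc]
    _ = -(O * ρ).trace := by rw [hGunit]; simp
  rw [hWH, hW]
  simp only [Matrix.mul_add, Matrix.add_mul, Matrix.smul_mul, Matrix.mul_smul,
    Matrix.mul_one, Matrix.one_mul, trace_add, trace_smul, smul_add, smul_smul]
  rw [h1, h2, h3]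
  simp only [smul_eq_mul]
  ring_nf
  rw [Complex.I_sq]
  ring

theorem integral_aux (a m : ℝ) :
    ∫ θ in (0:ℝ)..(2*Real.pi), (Real.cos (2*θ) * a + Real.sin (2*θ) * m)^2
      = Real.pi * (a^2 + m^2) := by
  have key : ∀ θ : ℝ, (Real.cos (2*θ) * a + Real.sin (2*θ) * m)^2
      = (a^2+m^2)/2 + ((a^2-m^2)/2) * Real.cos (4*θ) + (a*m) * Real.sin (4*θ) := by
    intro θ
    have h1 := Real.sin_sq_add_cos_sq (2*θ)
    have h2 : Real.cos (2*(2*θ)) = 2 * Real.cos (2*θ)^2 - 1 := Real.cos_two_mul _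
    have h3 : Real.sin (2*(2*θ)) = 2 * Real.sin (2*θ) * Real.cos (2*θ) := Real.sin_two_mul _
    rw [show (4:ℝ)*θ = 2*(2*θ) by ring, h2, h3]
    linear_combination m^2 * h1
  simp only [key]
  have i1 : IntervalIntegrable (fun _ : ℝ => (a^2+m^2)/2) volume 0 (2*Real.pi) :=
    intervalIntegrable_const
  have i2 : IntervalIntegrable (fun θ : ℝ => ((a^2-m^2)/2) * Real.cos (4*θ)) volume 0 (2*Real.pi) :=
    (by fun_prop : Continuous fun θ : ℝ => ((a^2-m^2)/2) * Real.cos (4*θ)).intervalIntegrable _ _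
  have i3 : IntervalIntegrable (fun θ : ℝ => (a*m) * Real.sin (4*θ)) volume 0 (2*Real.pi) :=
    (by fun_prop : Continuous fun θ : ℝ => (a*m) * Real.sin (4*θ)).intervalIntegrable _ _
  rw [intervalIntegral.integral_add (i1.add i2) i3, intervalIntegral.integral_add i1 i2]
  have hc4 : (∫ θ in (0:ℝ)..(2*Real.pi), Real.cos (4*θ)) = 0 := by
    rw [intervalIntegral.integral_comp_mul_left Real.cos (by norm_num : (4:ℝ) ≠ 0)]
    rw [integral_cos, show (4:ℝ) * (2*Real.pi) = ((8:ℕ):ℝ) * Real.pi by push_cast; ring,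
      Real.sin_nat_mul_pi]
    simp
  have hs4 : (∫ θ in (0:ℝ)..(2*Real.pi), Real.sin (4*θ)) = 0 := by
    rw [intervalIntegral.integral_comp_mul_left Real.sin (by norm_num : (4:ℝ) ≠ 0)]
    rw [integral_sin, show (4:ℝ) * (2*Real.pi) = ((4:ℕ):ℝ) * (2*Real.pi) by push_cast; ring,
      Real.cos_nat_mul_two_pi]
    simp
  rw [intervalIntegral.integral_const_mul, intervalIntegral.integral_const_mul, hc4, hs4,
    intervalIntegral.integral_const]
  simp
  ring

/-- For a Hermitian observable `O` anticommuting with the Hermitian unitary `G`,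
with `W(θ) = exp(−iθG)`, one has
`E_θ Tr[O W ρ W†]² = ½ Tr[Oρ]² + ½ Tr[iOGρ]² ≥ ½ Tr[Oρ]²`,
with `θ` uniform on `[0, 2π]`. -/
theorem expectation_sq_anticommuting
    (d : ℕ) (hd : 1 ≤ d)
    (G O : Matrix (Fin d) (Fin d) ℂ)
    (hGherm : G.IsHermitian) (hGunit : G * G = 1) (hO : O.IsHermitian)
    (hanti : O * G = -(G * O))
    (ρ : Matrix (Fin d) (Fin d) ℂ) (hρ : ρ.PosSemidef) (hρtr : ρ.trace = 1) :
    (1 / (2 * Real.pi)) * (∫ θ in (0:ℝ)..(2 * Real.pi),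
        ((O * (Wrot G θ * ρ * (Wrot G θ)ᴴ)).trace.re) ^ 2)
      = (1 / 2) * ((O * ρ).trace.re) ^ 2
        + (1 / 2) * (((Complex.I • (O * G)) * ρ).trace.re) ^ 2
    ∧ (1 / (2 * Real.pi)) * (∫ θ in (0:ℝ)..(2 * Real.pi),
        ((O * (Wrot G θ * ρ * (Wrot G θ)ᴴ)).trace.re) ^ 2)
      ≥ (1 / 2) * ((O * ρ).trace.re) ^ 2 := by
  set a : ℝ := (O * ρ).trace.re with ha
  set m : ℝ := ((O * G) * ρ).trace.im with hm
  have hb : ((Complex.I • (O * G)) * ρ).trace.re = -m := by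
    rw [Matrix.smul_mul, trace_smul]
    simp [Complex.mul_re, hm]
  have htr : ∀ θ : ℝ, ((O * (Wrot G θ * ρ * (Wrot G θ)ᴴ)).trace.re)
      = Real.cos (2*θ) * a + Real.sin (2*θ) * m := by
    intro θ
    rw [trace_Wrot G O ρ hGherm hGunit hanti θ]
    have h1 := Real.sin_sq_add_cos_sq θ
    have hc2 : Real.cos (2*θ) = Real.cos θ^2 - Real.sin θ^2 := by
      rw [Real.cos_two_mul]; linear_combination h1
    have hs2 : Real.sin (2*θ) = 2 * Real.sin θ * Real.cos θ := Real.sin_two_mul θ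
    have hrw : ((Real.cos θ:ℂ)^2 - (Real.sin θ:ℂ)^2) * (O * ρ).trace
        - 2 * Complex.I * (Real.sin θ:ℂ) * (Real.cos θ:ℂ) * ((O * G) * ρ).trace
        = ((Real.cos θ^2 - Real.sin θ^2 : ℝ):ℂ) * (O * ρ).trace
          - Complex.I * (((2 * Real.sin θ * Real.cos θ) : ℝ):ℂ) * ((O * G) * ρ).trace := by
      push_cast
      ring
    rw [hrw, ← hc2, ← hs2]
    simp only [Complex.sub_re, Complex.mul_re, Complex.mul_im, Complex.I_re, Complex.I_im,
      Complex.ofReal_re, Complex.ofReal_im, ha, hm]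
    ring
  have hint : (∫ θ in (0:ℝ)..(2 * Real.pi),
      ((O * (Wrot G θ * ρ * (Wrot G θ)ᴴ)).trace.re) ^ 2) = Real.pi * (a^2 + m^2) := by
    rw [show (∫ θ in (0:ℝ)..(2 * Real.pi), ((O * (Wrot G θ * ρ * (Wrot G θ)ᴴ)).trace.re) ^ 2)
        = ∫ θ in (0:ℝ)..(2*Real.pi), (Real.cos (2*θ) * a + Real.sin (2*θ) * m)^2 from by
      congr 1; ext θ; rw [htr θ]]
    exact integral_aux a m
  have heq : (1 / (2 * Real.pi)) * (∫ θ in (0:ℝ)..(2 * Real.pi),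
        ((O * (Wrot G θ * ρ * (Wrot G θ)ᴴ)).trace.re) ^ 2)
      = (1 / 2) * a ^ 2 + (1 / 2) * (((Complex.I • (O * G)) * ρ).trace.re) ^ 2 := by
    rw [hint, hb]
    have hπ : Real.pi ≠ 0 := Real.pi_ne_zero
    field_simp
  refine ⟨heq, ?_⟩
  rw [heq]
  nlinarith [sq_nonneg (((Complex.I • (O * G)) * ρ).trace.re)]
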